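/- Let φ ∈ C¹ with compact support on ℝ³, let 0 < ε < r_ε with r_ε = ε^{1/3}, N = 1/ε, and points x₁,…,x_N with |x_i − x_j| > 2 r_ε for i ≠ j. For each i let χ_i be the function supported in B(x_i, r_ε) equal to the solution of Δχ_i = 0 in {ε < |x−x_i| < r_ε}, χ_i = φ(x) − φ(x_i) on B(x_i,ε), χ_i = 0 on |x−x_i| = r_ε, and set Q_ε = Σ_i χ_i. Then ‖Q_ε‖_{L^∞} ≤ 2‖φ‖_{L^∞} and ‖Q_ε‖²_{L²(ℝ³)} ≤ (4π/3)‖∇φ‖²_{L^∞} ε². -/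

import Mathlib

open MeasureTheory Real

noncomputable section

/-- The Laplacian of `f : ℝ³ → ℝ` at `z`, as the trace of the second derivative. -/
def laplacian3 (f : EuclideanSpace ℝ (Fin 3) → ℝ) (z : EuclideanSpace ℝ (Fin 3)) : ℝ :=
  ∑ i : Fin 3, iteratedFDeriv ℝ 2 f z (fun _ => EuclideanSpace.single i (1 : ℝ))

section Aux

open Metric Set Filter Topology

local notation "E3" => EuclideanSpace ℝ (Fin 3)

/-- Derivative of the quadratic `y ↦ a * ⟪y-c, y-c⟫`. -/
lemma quad_hasFDerivAt (a : ℝ) (c y : EuclideanSpace ℝ (Fin 3)) :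
    HasFDerivAt (fun w : E3 => a * (inner ℝ (w - c) (w - c) : ℝ))
      (((2*a) • innerSL ℝ : E3 →L[ℝ] E3 →L[ℝ] ℝ) (y - c)) y := by
  have h1 : HasFDerivAt (fun w : E3 => w - c) (ContinuousLinearMap.id ℝ E3) y :=
    (hasFDerivAt_id y).sub_const c
  have h2 := (h1.inner ℝ h1).const_mul a
  refine h2.congr_fderiv ?_
  ext w
  simp only [fderivInnerCLM_apply, ContinuousLinearMap.smul_apply, innerSL_apply_apply,
    ContinuousLinearMap.comp_apply, ContinuousLinearMap.prod_apply, ContinuousLinearMap.id_apply,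
    smul_eq_mul]
  rw [real_inner_comm w (y - c)]
  ring

lemma affine_hasFDerivAt (Φ : E3 →L[ℝ] E3 →L[ℝ] ℝ) (c z : E3) :
    HasFDerivAt (fun y : E3 => Φ (y - c)) Φ z := by
  have h1 : HasFDerivAt (fun w : E3 => w - c) (ContinuousLinearMap.id ℝ E3) z :=
    (hasFDerivAt_id z).sub_const c
  have h2 := Φ.hasFDerivAt.comp z h1
  rw [ContinuousLinearMap.comp_id] at h2
  exact h2

/-- Second directional derivative is nonpositive at a local maximum. -/
lemma second_dir_nonpos {f : EuclideanSpace ℝ (Fin 3) → ℝ} {z v : EuclideanSpace ℝ (Fin 3)}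
    (hf : ContDiffAt ℝ 2 f z) (hmax : IsLocalMax f z) :
    fderiv ℝ (fderiv ℝ f) z v v ≤ 0 := by
  by_contra hpos
  push_neg at hpos
  set c : ℝ := fderiv ℝ (fderiv ℝ f) z v v with hc
  set L : ℝ → E3 := fun t => z + t • v with hL
  have hL0 : L 0 = z := by simp [hL]
  have hLd : ∀ t : ℝ, HasDerivAt L v t := by
    intro t
    have h := ((hasDerivAt_id t).smul_const v).const_add z
    rw [one_smul] at h
    exact h
  have hLcont : Continuous L := by continuity
  have hLten : Tendsto L (𝓝 0) (𝓝 z) := by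
    rw [← hL0]; exact hLcont.continuousAt
  have hdiff : ∀ᶠ y in 𝓝 z, DifferentiableAt ℝ f y := by
    filter_upwards [hf.eventually (by norm_num)] with y hy
    exact hy.differentiableAt two_ne_zero
  set g1 : ℝ → ℝ := fun t => fderiv ℝ f (L t) v with hg1
  have hF : DifferentiableAt ℝ (fderiv ℝ f) z := by
    have := hf.fderiv_right (m := 1) (by norm_num)
    exact this.differentiableAt one_ne_zero
  have hev : HasFDerivAt (fun y => fderiv ℝ f y v)
      ((ContinuousLinearMap.apply ℝ ℝ v).comp (fderiv ℝ (fderiv ℝ f) z)) z :=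
    (ContinuousLinearMap.apply ℝ ℝ v).hasFDerivAt.comp z hF.hasFDerivAt
  have hg1d : HasDerivAt g1 c 0 := by
    rw [← hL0] at hev
    have h := hev.comp_hasDerivAt 0 (hLd 0)
    rw [hL0] at h
    exact h
  have hg10 : g1 0 = 0 := by
    simp [hg1, hL0, hmax.fderiv_eq_zero]
  have hslope : Tendsto (fun t : ℝ => g1 t / t) (𝓝[≠] 0) (𝓝 c) := by
    have h := hasDerivAt_iff_tendsto_slope.1 hg1d
    refine h.congr fun t => ?_
    simp [slope_def_field, hg10]
  have hpos' : ∀ᶠ t in 𝓝[>] (0:ℝ), 0 < g1 t := by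
    have h1 : ∀ᶠ t in 𝓝[>] (0:ℝ), 0 < g1 t / t := by
      have := (hslope.mono_left (nhdsWithin_mono 0 (fun t ht => ne_of_gt ht))).eventually
        (eventually_gt_nhds hpos)
      exact this
    filter_upwards [h1, self_mem_nhdsWithin] with t h1 ht
    exact (div_pos_iff.1 h1).resolve_right (fun h => absurd ht (by simp; linarith [h.2])) |>.1
  have hball : ∀ᶠ t in 𝓝 (0:ℝ), DifferentiableAt ℝ f (L t) ∧ f (L t) ≤ f z :=
    hLten.eventually (hdiff.and hmax)
  obtain ⟨a, ha, hball'⟩ := Metric.eventually_nhds_iff_ball.1 hball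
  obtain ⟨t1, ht1, hIoo⟩ := (mem_nhdsGT_iff_exists_Ioo_subset).1 hpos'
  have ht1' : (0:ℝ) < t1 := ht1
  set T : ℝ := min (a / 2) (t1 / 2) with hT
  have hT0 : 0 < T := lt_min (by linarith) (by linarith)
  have hTa : ∀ t ∈ Icc (0:ℝ) T, t ∈ ball (0:ℝ) a := by
    intro t ht
    simp only [mem_ball, dist_zero_right, Real.norm_eq_abs, abs_of_nonneg ht.1]
    have : T < a := lt_of_le_of_lt (min_le_left _ _) (by linarith)
    linarith [ht.2]
  set g : ℝ → ℝ := fun t => f (L t) with hg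
  have hgd : ∀ t ∈ Icc (0:ℝ) T, HasDerivAt g (g1 t) t := by
    intro t ht
    exact ((hball' t (hTa t ht)).1.hasFDerivAt.comp_hasDerivAt t (hLd t))
  have hmono : StrictMonoOn g (Icc 0 T) := by
    apply strictMonoOn_of_deriv_pos (convex_Icc 0 T)
    · intro t ht
      exact (hgd t ht).continuousAt.continuousWithinAt
    · intro t ht
      rw [interior_Icc] at ht
      rw [(hgd t (Ioo_subset_Icc_self ht)).deriv]
      apply hIoo
      constructor
      · exact ht.1
      · have : T < t1 := lt_of_le_of_lt (min_le_right _ _) (by linarith)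
        linarith [ht.2]
  have h1 : g 0 < g T := hmono (left_mem_Icc.2 hT0.le) (right_mem_Icc.2 hT0.le) hT0
  have h2 : g T ≤ g 0 := by
    have := (hball' T (hTa T (right_mem_Icc.2 hT0.le))).2
    simpa [hg, hL0] using this
  linarith

/-- The maximum principle for the penalized annulus problem. -/
lemma max_principle {c : E3} {ε rε B : ℝ} (hε : 0 < ε) (hlt : ε < rε) {u : E3 → ℝ}
    (hcont : Continuous u)
    (hreg : ContDiffOn ℝ 2 u {y | ε < dist y c ∧ dist y c < rε})
    (hharm : ∀ y, ε < dist y c → dist y c < rε → laplacian3 u y = 0)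
    (hin : ∀ y, dist y c ≤ ε → u y ≤ B)
    (hout : ∀ y, rε ≤ dist y c → u y = 0) (hB : 0 ≤ B) :
    ∀ y, u y ≤ B := by
  have hrε : 0 < rε := hε.trans hlt
  set U : Set E3 := {y | ε < dist y c ∧ dist y c < rε} with hU
  have hUopen : IsOpen U := by
    apply IsOpen.inter
    · exact isOpen_lt continuous_const (continuous_id.dist continuous_const)
    · exact isOpen_lt (continuous_id.dist continuous_const) continuous_const
  set A : Set E3 := closedBall c rε \ ball c ε with hA
  have hAc : IsCompact A := (isCompact_closedBall c rε).diff isOpen_ball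
  have hAne : A.Nonempty := by
    refine ⟨c + rε • EuclideanSpace.single (0 : Fin 3) (1:ℝ), ?_, ?_⟩
    · simp [mem_closedBall, dist_eq_norm, norm_smul, EuclideanSpace.norm_single,
        abs_of_pos hrε]
    · simp [mem_ball, dist_eq_norm, norm_smul, EuclideanSpace.norm_single, abs_of_pos hrε]
      linarith
  have key : ∀ δ > 0, ∀ y ∈ A, u y ≤ B + δ * rε ^ 2 := by
    intro δ hδ y hy
    set q : E3 → ℝ := fun w => δ * (inner ℝ (w - c) (w - c) : ℝ) with hq
    have hq_eq : ∀ w, q w = δ * dist w c ^ 2 := by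
      intro w
      change δ * (inner ℝ (w - c) (w - c) : ℝ) = δ * dist w c ^ 2
      rw [real_inner_self_eq_norm_sq, dist_eq_norm]
    set v : E3 → ℝ := fun w => u w + q w with hv
    have hqc : ContDiff ℝ 2 q :=
      contDiff_const.mul ((contDiff_id.sub contDiff_const).inner ℝ
        (contDiff_id.sub contDiff_const))
    have hvcont : Continuous v := hcont.add (hqc.continuous)
    obtain ⟨z, hzA, hzmax⟩ := hAc.exists_isMaxOn hAne hvcont.continuousOn
    have hzball : dist z c ≤ rε := by simpa [mem_closedBall] using hzA.1
    have hzout : ε ≤ dist z c := by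
      have := hzA.2; simpa [mem_ball, not_lt] using this
    have hbdry : dist z c = ε ∨ dist z c = rε := by
      by_contra h
      push_neg at h
      have hzU : z ∈ U := ⟨lt_of_le_of_ne hzout (Ne.symm h.1), lt_of_le_of_ne hzball h.2⟩
      have hU_nhds : U ∈ 𝓝 z := hUopen.mem_nhds hzU
      have hlocmax : IsLocalMax v z := by
        filter_upwards [hU_nhds] with w hw
        exact hzmax ⟨le_of_lt hw.2, not_lt.2 (le_of_lt hw.1)⟩
      have huCD : ContDiffAt ℝ 2 u z := hreg.contDiffAt hU_nhds
      have hvCD : ContDiffAt ℝ 2 v z := huCD.add hqc.contDiffAt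
      set Φ : E3 →L[ℝ] E3 →L[ℝ] ℝ := (2*δ) • innerSL ℝ with hΦ
      have hsplit : fderiv ℝ (fderiv ℝ v) z = fderiv ℝ (fderiv ℝ u) z + Φ := by
        have h1 : fderiv ℝ v =ᶠ[𝓝 z] fun w => fderiv ℝ u w + Φ (w - c) := by
          filter_upwards [hU_nhds] with w hw
          have hud : DifferentiableAt ℝ u w :=
            (hreg.contDiffAt (hUopen.mem_nhds hw)).differentiableAt two_ne_zero
          exact (hud.hasFDerivAt.add (quad_hasFDerivAt δ c w)).fderiv
        rw [h1.fderiv_eq]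
        have hFu : DifferentiableAt ℝ (fderiv ℝ u) z :=
          (huCD.fderiv_right (m := 1) (by norm_num)).differentiableAt one_ne_zero
        exact (hFu.hasFDerivAt.add (affine_hasFDerivAt Φ c z)).fderiv
      have hlap : laplacian3 u z = 0 := hharm z hzU.1 hzU.2
      have hsum : (0:ℝ) < ∑ i : Fin 3, fderiv ℝ (fderiv ℝ v) z
          (EuclideanSpace.single i (1:ℝ)) (EuclideanSpace.single i (1:ℝ)) := by
        have heach : ∀ i : Fin 3, fderiv ℝ (fderiv ℝ v) z
            (EuclideanSpace.single i (1:ℝ)) (EuclideanSpace.single i (1:ℝ))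
            = fderiv ℝ (fderiv ℝ u) z (EuclideanSpace.single i (1:ℝ))
              (EuclideanSpace.single i (1:ℝ)) + 2*δ := by
          intro i
          rw [hsplit]
          have hinner : (inner ℝ (EuclideanSpace.single i (1:ℝ) : E3)
              (EuclideanSpace.single i (1:ℝ)) : ℝ) = 1 := by
            rw [real_inner_self_eq_norm_sq, EuclideanSpace.norm_single]; norm_num
          simp [hΦ, hinner]
          rw [show (innerSL ℝ (EuclideanSpace.single i (1:ℝ) : E3)) (EuclideanSpace.single i (1:ℝ))
            = 1 from hinner, mul_one]
        rw [Finset.sum_congr rfl (fun i _ => heach i), Finset.sum_add_distrib]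
        have hlap' : ∑ i : Fin 3, fderiv ℝ (fderiv ℝ u) z
            (EuclideanSpace.single i (1:ℝ)) (EuclideanSpace.single i (1:ℝ)) = 0 := by
          rw [← hlap]
          unfold laplacian3
          refine Finset.sum_congr rfl fun i _ => ?_
          rw [iteratedFDeriv_two_apply]
        rw [hlap']
        simp
        positivity
      have hnonpos : ∑ i : Fin 3, fderiv ℝ (fderiv ℝ v) z
          (EuclideanSpace.single i (1:ℝ)) (EuclideanSpace.single i (1:ℝ)) ≤ 0 :=
        Finset.sum_nonpos fun i _ => second_dir_nonpos hvCD hlocmax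
      linarith
    have huz : u z ≤ B := by
      rcases hbdry with h | h
      · exact hin z h.le
      · rw [hout z h.ge]; exact hB
    have h1 : u y ≤ v y := by
      have : 0 ≤ q y := by rw [hq_eq]; positivity
      simp only [hv]; linarith
    have h2 : v y ≤ v z := hzmax hy
    have h3 : v z ≤ B + δ * rε ^ 2 := by
      have hq' : q z ≤ δ * rε ^ 2 := by
        rw [hq_eq]
        have h0 : (0:ℝ) ≤ dist z c := dist_nonneg
        have h4 : dist z c ^ 2 ≤ rε ^ 2 := pow_le_pow_left₀ h0 hzball 2
        exact mul_le_mul_of_nonneg_left h4 hδ.le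
      simp only [hv]; linarith
    linarith
  intro y
  rcases le_or_gt (dist y c) ε with h | h
  · exact hin y h
  rcases le_or_gt rε (dist y c) with h' | h'
  · rw [hout y h']; exact hB
  have hyA : y ∈ A := ⟨mem_closedBall.2 h'.le, by simp [mem_ball, not_lt]; linarith⟩
  refine le_of_forall_pos_le_add fun η hη => ?_
  have hδ : 0 < η / rε ^ 2 := by positivity
  have heq : η / rε ^ 2 * rε ^ 2 = η := by field_simp
  linarith [key (η / rε ^ 2) hδ y hyA]

lemma laplacian3_neg (f : E3 → ℝ) (z : E3) :
    laplacian3 (fun y => -(f y)) z = -laplacian3 f z := by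
  unfold laplacian3
  rw [← Finset.sum_neg_distrib]
  refine Finset.sum_congr rfl fun i _ => ?_
  rw [show (fun y => -(f y)) = -f from rfl, iteratedFDeriv_neg_apply]
  simp

/-- Two-sided maximum principle. -/
lemma max_principle_abs {c : E3} {ε rε B : ℝ} (hε : 0 < ε) (hlt : ε < rε) {u : E3 → ℝ}
    (hcont : Continuous u)
    (hreg : ContDiffOn ℝ 2 u {y | ε < dist y c ∧ dist y c < rε})
    (hharm : ∀ y, ε < dist y c → dist y c < rε → laplacian3 u y = 0)
    (hin : ∀ y, dist y c ≤ ε → |u y| ≤ B)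
    (hout : ∀ y, rε ≤ dist y c → u y = 0) (hB : 0 ≤ B) :
    ∀ y, |u y| ≤ B := by
  intro y
  rw [abs_le]
  constructor
  · have := max_principle hε hlt (u := fun w => -(u w)) hcont.neg hreg.neg
      (fun w h1 h2 => by rw [laplacian3_neg, hharm w h1 h2, neg_zero])
      (fun w hw => by
        have h := abs_le.1 (hin w hw)
        show -u w ≤ B
        linarith [h.1])
      (fun w hw => by show -u w = 0; rw [hout w hw, neg_zero]) hB y
    linarith
  · exact max_principle hε hlt hcont hreg hharm
      (fun w hw => (abs_le.1 (hin w hw)).2) hout hB y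

end Aux

theorem stmt6
    (ε rε : ℝ) (hε : 0 < ε) (hεlt : ε < 1) (hrε : rε = ε ^ ((1:ℝ)/3))
    (N : ℕ) (hN : (N : ℝ) = 1 / ε)
    (x : Fin N → EuclideanSpace ℝ (Fin 3))
    (hsep : ∀ i j, i ≠ j → 2 * rε < dist (x i) (x j))
    (φ : EuclideanSpace ℝ (Fin 3) → ℝ)
    (hφ : ContDiff ℝ 1 φ) (hφsupp : HasCompactSupport φ)
    (Cφ Cgrad : ℝ)
    (hCφ : ∀ y, |φ y| ≤ Cφ) (hCgrad : ∀ y, ‖gradient φ y‖ ≤ Cgrad)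
    (χ : Fin N → EuclideanSpace ℝ (Fin 3) → ℝ)
    (hχcont : ∀ i, Continuous (χ i))
    (hχreg : ∀ i, ContDiffOn ℝ 2 (χ i) {y | ε < dist y (x i) ∧ dist y (x i) < rε})
    (hχharm : ∀ i, ∀ y, ε < dist y (x i) → dist y (x i) < rε → laplacian3 (χ i) y = 0)
    (hχin : ∀ i, ∀ y, dist y (x i) ≤ ε → χ i y = φ y - φ (x i))
    (hχout : ∀ i, ∀ y, rε ≤ dist y (x i) → χ i y = 0) :
    (∀ y, |∑ i, χ i y| ≤ 2 * Cφ) ∧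
    ∫ y : EuclideanSpace ℝ (Fin 3), (∑ i, χ i y) ^ 2 ≤ (4 * π / 3) * Cgrad ^ 2 * ε ^ 2 := by
  have hCφ0 : 0 ≤ Cφ := (abs_nonneg _).trans (hCφ 0)
  have hCg0 : 0 ≤ Cgrad := (norm_nonneg _).trans (hCgrad 0)
  have hεrε : ε < rε := by
    rw [hrε]
    calc ε = ε ^ (1:ℝ) := (Real.rpow_one ε).symm
    _ < ε ^ ((1:ℝ)/3) := Real.rpow_lt_rpow_of_exponent_gt hε hεlt (by norm_num)
  have hrε0 : 0 < rε := hε.trans hεrε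
  -- bound on the Fréchet derivative of φ
  have hfd : ∀ y, ‖fderiv ℝ φ y‖ ≤ Cgrad := by
    intro y
    have h : ‖gradient φ y‖ = ‖fderiv ℝ φ y‖ := by
      rw [gradient]; exact LinearIsometryEquiv.norm_map _ _
    rw [← h]; exact hCgrad y
  have hMVT : ∀ (a b : EuclideanSpace ℝ (Fin 3)), |φ a - φ b| ≤ Cgrad * dist a b := by
    intro a b
    have := Convex.norm_image_sub_le_of_norm_fderiv_le
      (f := φ) (C := Cgrad) (s := Set.univ)
      (fun w _ => (hφ.differentiable one_ne_zero).differentiableAt)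
      (fun w _ => hfd w) convex_univ (Set.mem_univ b) (Set.mem_univ a)
    rwa [Real.norm_eq_abs, ← dist_eq_norm] at this
  -- pointwise bounds on each χ i
  have hb1 : ∀ i y, |χ i y| ≤ 2 * Cφ := by
    intro i
    refine max_principle_abs hε hεrε (hχcont i) (hχreg i) (hχharm i) ?_ (hχout i)
      (by linarith)
    intro w hw
    rw [hχin i w hw]
    calc |φ w - φ (x i)| ≤ |φ w| + |φ (x i)| := abs_sub _ _
    _ ≤ Cφ + Cφ := add_le_add (hCφ w) (hCφ (x i))
    _ = 2 * Cφ := by ring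
  have hb2 : ∀ i y, |χ i y| ≤ Cgrad * ε := by
    intro i
    refine max_principle_abs hε hεrε (hχcont i) (hχreg i) (hχharm i) ?_ (hχout i)
      (by positivity)
    intro w hw
    rw [hχin i w hw]
    exact (hMVT w (x i)).trans (mul_le_mul_of_nonneg_left hw hCg0)
  -- disjointness of supports
  have hdisj : ∀ y (i j : Fin N), i ≠ j → χ i y ≠ 0 → χ j y = 0 := by
    intro y i j hij hi
    by_contra hj
    have h1 : dist y (x i) < rε := lt_of_not_ge fun h => hi (hχout i y h)
    have h2 : dist y (x j) < rε := lt_of_not_ge fun h => hj (hχout j y h)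
    have := hsep i j hij
    have h3 : dist (x i) (x j) ≤ dist y (x i) + dist y (x j) := by
      rw [dist_comm y (x i)] at *
      exact dist_triangle (x i) y (x j)
    linarith
  -- pointwise structure of the sum
  have hsum_abs : ∀ (B : ℝ), 0 ≤ B → (∀ i y, |χ i y| ≤ B) → ∀ y, |∑ i, χ i y| ≤ B := by
    intro B hB hb y
    by_cases hall : ∀ i, χ i y = 0
    · simp [hall]; exact hB
    · push_neg at hall
      obtain ⟨i0, hi0⟩ := hall
      rw [Finset.sum_eq_single i0 (fun j _ hj => hdisj y i0 j (fun h => hj h.symm) hi0)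
        (fun h => absurd (Finset.mem_univ i0) h)]
      exact hb i0 y
  have hsq : ∀ y, (∑ i, χ i y) ^ 2 = ∑ i, (χ i y) ^ 2 := by
    intro y
    by_cases hall : ∀ i, χ i y = 0
    · simp [hall]
    · push_neg at hall
      obtain ⟨i0, hi0⟩ := hall
      rw [Finset.sum_eq_single i0 (fun j _ hj => hdisj y i0 j (fun h => hj h.symm) hi0)
        (fun h => absurd (Finset.mem_univ i0) h),
        Finset.sum_eq_single i0
          (fun j _ hj => by rw [hdisj y i0 j (fun h => hj h.symm) hi0]; ring)
        (fun h => absurd (Finset.mem_univ i0) h)]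
  refine ⟨hsum_abs (2 * Cφ) (by linarith) hb1, ?_⟩
  -- integrability
  have hsupp : ∀ i, HasCompactSupport (χ i) := by
    intro i
    apply HasCompactSupport.intro (isCompact_closedBall (x i) rε)
    intro y hy
    rw [Metric.mem_closedBall, not_le] at hy
    exact hχout i y hy.le
  have hint : ∀ i : Fin N, Integrable (fun y : EuclideanSpace ℝ (Fin 3) => (χ i y) ^ 2) := by
    intro i
    have h : HasCompactSupport (fun y : EuclideanSpace ℝ (Fin 3) => (χ i y) ^ 2) :=
      (hsupp i).comp_left (g := fun t : ℝ => t ^ 2) (by norm_num)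
    exact ((hχcont i).pow 2).integrable_of_hasCompactSupport h
  -- volume of the closed ball of radius rε
  have hΓ : Real.Gamma ((3:ℝ)/2 + 1) = 3/4 * Real.sqrt π := by
    rw [Real.Gamma_add_one (by norm_num)]
    have h32 : (3:ℝ)/2 = 1/2 + 1 := by norm_num
    rw [h32, Real.Gamma_add_one (by norm_num), Real.Gamma_one_half_eq]
    ring
  have hratio : Real.sqrt π ^ 3 / Real.Gamma ((3:ℝ)/2 + 1) = 4 * π / 3 := by
    have hs : Real.sqrt π ^ 2 = π := Real.sq_sqrt pi_pos.le
    have hs0 : Real.sqrt π ≠ 0 := ne_of_gt (Real.sqrt_pos.2 pi_pos)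
    rw [hΓ, pow_succ, hs]
    field_simp
  have hvol : ∀ i : Fin N, (volume (Metric.closedBall (x i) rε)).toReal
      = rε ^ 3 * (4 * π / 3) := by
    intro i
    have hv := EuclideanSpace.volume_closedBall (Fin 3) (x i) rε
    simp only [Fintype.card_fin, Nat.cast_ofNat] at hv
    rw [hv, hratio, ENNReal.toReal_mul, ENNReal.toReal_pow,
      ENNReal.toReal_ofReal hrε0.le, ENNReal.toReal_ofReal (by positivity)]
  -- integral bound for each χ i
  have hIbound : ∀ i : Fin N,
      (∫ y : EuclideanSpace ℝ (Fin 3), (χ i y) ^ 2) ≤ (Cgrad * ε)^2 * (rε^3 * (4*π/3)) := by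
    intro i
    have hind : Integrable (Set.indicator (Metric.closedBall (x i) rε)
        (fun _ : EuclideanSpace ℝ (Fin 3) => (Cgrad * ε)^2)) := by
      rw [integrable_indicator_iff measurableSet_closedBall]
      exact integrableOn_const measure_closedBall_lt_top.ne
    have hle : ∀ y, (χ i y)^2 ≤ Set.indicator (Metric.closedBall (x i) rε)
        (fun _ => (Cgrad * ε)^2) y := by
      intro y
      by_cases hy : y ∈ Metric.closedBall (x i) rε
      · rw [Set.indicator_of_mem hy]
        have h := abs_le.1 (hb2 i y)
        exact sq_le_sq' h.1 h.2
      · rw [Set.indicator_of_notMem hy,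
          hχout i y (by rw [Metric.mem_closedBall, not_le] at hy; exact hy.le)]
        norm_num
    calc (∫ y : EuclideanSpace ℝ (Fin 3), (χ i y) ^ 2)
        ≤ ∫ y, Set.indicator (Metric.closedBall (x i) rε)
            (fun _ => (Cgrad * ε)^2) y := integral_mono (hint i) hind hle
      _ = (Cgrad * ε)^2 * (rε^3 * (4*π/3)) := by
          rw [integral_indicator_const _ measurableSet_closedBall, measureReal_def, hvol i, smul_eq_mul]
          ring
  -- final computation
  have hrε3 : rε ^ 3 = ε := by
    rw [hrε, ← Real.rpow_natCast (ε ^ ((1:ℝ)/3)) 3, ← Real.rpow_mul hε.le]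
    norm_num
  have hNε : (N : ℝ) * ε = 1 := by rw [hN]; field_simp
  calc (∫ y : EuclideanSpace ℝ (Fin 3), (∑ i, χ i y) ^ 2)
      = ∫ y : EuclideanSpace ℝ (Fin 3), ∑ i, (χ i y) ^ 2 := by
        congr 1; funext y; exact hsq y
    _ = ∑ i, ∫ y : EuclideanSpace ℝ (Fin 3), (χ i y) ^ 2 :=
        integral_finset_sum _ (fun i _ => hint i)
    _ ≤ ∑ _i : Fin N, (Cgrad * ε)^2 * (rε^3 * (4*π/3)) :=
        Finset.sum_le_sum (fun i _ => hIbound i)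
    _ = N * ((Cgrad * ε)^2 * (rε^3 * (4*π/3))) := by
        rw [Finset.sum_const, Finset.card_univ, Fintype.card_fin, nsmul_eq_mul]
    _ = (4 * π / 3) * Cgrad ^ 2 * ε ^ 2 := by
        rw [hrε3]
        have : (N:ℝ) * ((Cgrad * ε) ^ 2 * (ε * (4 * π / 3)))
            = ((N:ℝ) * ε) * (Cgrad ^ 2 * ε ^ 2 * (4 * π / 3)) := by ring
        rw [this, hNε]
        ring

end
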